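/- There exist absolute constants δ₀ ∈ (0,1) and C > 0 such that for all 0 < δ ≤ δ₀ the following holds. Let a : (0,∞) × ℝ → ℝ be continuously differentiable with |a(λ,x)| ≤ δ, |∂_λ a(λ,x)| ≤ δ λ⁻², and |∂_x a(λ,x)| ≤ δ for all λ > 0 and x ∈ ℝ, and suppose w̃ : [1,∞) × ℝ → (0,∞) is continuously differentiable with w̃(1,x) = 1 for all x and ∂_s w̃(s,x) = − a(s·w̃(s,x), x)·w̃(s,x) / ( s·( 2 s·w̃(s,x) + a(s·w̃(s,x), x) ) ) for all s ≥ 1 and x ∈ ℝ. Then |∂_x w̃(s,x)| ≤ C δ for all s ≥ 1 and all x ∈ ℝ, and for every x the function s ↦ ∂_x w̃(s,x) converges to a finite limit as s → ∞. -/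

import Mathlib

set_option maxHeartbeats 1000000

open Filter Set Topology MeasureTheory Asymptotics

noncomputable section

private def gf (a wt : ℝ → ℝ → ℝ) (u x : ℝ) : ℝ :=
  -(a (u * wt u x) x * wt u x) / (u * (2 * u * wt u x + a (u * wt u x) x))

private def dAf (al ax wt wx : ℝ → ℝ → ℝ) (u x : ℝ) : ℝ :=
  al (u * wt u x) x * (u * wx u x) + ax (u * wt u x) x

private def Df (a wt : ℝ → ℝ → ℝ) (u x : ℝ) : ℝ :=
  u * (2 * u * wt u x + a (u * wt u x) x)

private def dDf (al ax wt wx : ℝ → ℝ → ℝ) (u x : ℝ) : ℝ :=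
  u * (2 * u * wx u x + dAf al ax wt wx u x)

private def Kf (a al ax wt wx : ℝ → ℝ → ℝ) (u x : ℝ) : ℝ :=
  (-(dAf al ax wt wx u x * wt u x + a (u * wt u x) x * wx u x) * Df a wt u x -
    -(a (u * wt u x) x * wt u x) * dDf al ax wt wx u x) / Df a wt u x ^ 2



lemma bootstrap {f : ℝ → ℝ} {b B : ℝ} (hbB : b < B)
    (hf : ContinuousOn f (Set.Ici 1))
    (h1 : |f 1| ≤ b)
    (step : ∀ t ≥ (1:ℝ), (∀ u ∈ Set.Icc (1:ℝ) t, |f u| ≤ B) → |f t| ≤ b) :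
    ∀ s ≥ (1:ℝ), |f s| ≤ b := by
  by_contra hcon
  push_neg at hcon
  -- first show ∀ s ≥ 1, |f s| ≤ B; then step finishes
  have key : ∀ s ≥ (1:ℝ), |f s| ≤ B := by
    by_contra hc2
    push_neg at hc2
    set S : Set ℝ := {s | 1 ≤ s ∧ B < |f s|} with hS
    have hSne : S.Nonempty := by
      obtain ⟨s, hs1, hs2⟩ := hc2; exact ⟨s, hs1, hs2⟩
    have hSbdd : BddBelow S := ⟨1, fun s hs => hs.1⟩
    set t := sInf S with htdef
    have ht1 : 1 ≤ t := le_csInf hSne fun s hs => hs.1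
    have hlt : ∀ u, 1 ≤ u → u < t → |f u| ≤ B := by
      intro u hu1 hut
      by_contra h
      push_neg at h
      exact absurd (csInf_le hSbdd ⟨hu1, h⟩) (not_le.2 hut)
    have htB : |f t| ≤ B := by
      rcases eq_or_lt_of_le ht1 with h | h
      · rw [← h]; exact h1.trans hbB.le
      · -- left continuity
        have hne : (𝓝[Set.Ico 1 t] t).NeBot := by
          rw [← mem_closure_iff_nhdsWithin_neBot, closure_Ico (by linarith : (1:ℝ) ≠ t)]
          exact ⟨ht1, le_refl t⟩
        have hcw : ContinuousWithinAt f (Set.Ico 1 t) t :=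
          (hf t ht1).mono (fun u hu => hu.1)
        have hev : ∀ᶠ u in 𝓝[Set.Ico 1 t] t, |f u| ≤ B :=
          eventually_nhdsWithin_of_forall (fun u hu => hlt u hu.1 hu.2)
        have : Tendsto (fun u => |f u|) (𝓝[Set.Ico 1 t] t) (𝓝 |f t|) :=
          (continuous_abs.continuousAt.comp_continuousWithinAt hcw)
        exact le_of_tendsto this hev
    have htb : |f t| ≤ b := step t ht1 (fun u hu => by
      rcases eq_or_lt_of_le hu.2 with h | h
      · rw [h]; exact htB
      · exact hlt u hu.1 h)
    -- now contradiction: continuity implies neighborhood of t is below B, but sInf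
    have hcw : ContinuousWithinAt f (Set.Ici 1) t := hf t ht1
    have hevB : ∀ᶠ u in 𝓝[Set.Ici 1] t, |f u| < B := by
      have : Tendsto (fun u => |f u|) (𝓝[Set.Ici 1] t) (𝓝 |f t|) :=
        continuous_abs.continuousAt.comp_continuousWithinAt hcw
      exact this.eventually_lt_const (lt_of_le_of_lt htb hbB)
    rw [eventually_nhdsWithin_iff] at hevB
    obtain ⟨ε, hε, hball⟩ := Metric.eventually_nhds_iff.1 hevB
    have : t + ε ≤ t := by
      apply le_csInf hSne
      intro s hs
      by_contra hst
      push_neg at hst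
      have hs1 : dist s t < ε := by
        rw [Real.dist_eq, abs_lt]
        constructor
        · have := csInf_le hSbdd hs; linarith
        · linarith
      exact absurd (hball hs1 hs.1) (not_lt.2 hs.2.le)
    linarith
  obtain ⟨s, hs1, hs2⟩ := hcon
  exact absurd (step s hs1 (fun u hu => key u hu.1)) (not_le.2 hs2)


lemma hasDerivAt_comp_curve {a al : ℝ → ℝ → ℝ} {l : ℝ → ℝ} {l' x axv : ℝ}
    (halc : ContinuousOn (fun p : ℝ × ℝ => al p.1 p.2) (Set.Ioi 0 ×ˢ Set.univ))
    (hal : ∀ y : ℝ, ∀ t > (0:ℝ), HasDerivAt (fun t' => a t' y) (al t y) t)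
    (hax : HasDerivAt (fun y => a (l x) y) axv x)
    (hl : HasDerivAt l l' x) (hlpos : ∀ y, 0 < l y) :
    HasDerivAt (fun y => a (l y) y) (al (l x) x * l' + axv) x := by
  have hslice : ∀ y : ℝ, ContinuousOn (fun t => al t y) (Set.Ioi 0) := by
    intro y
    have : ContinuousOn (fun t : ℝ => ((t, y) : ℝ × ℝ)) (Set.Ioi 0) :=
      (continuous_id.prodMk continuous_const).continuousOn
    exact halc.comp this (fun t ht => ⟨ht, trivial⟩)
  have hFTC : ∀ y : ℝ, a (l y) y - a (l x) y = ∫ t in (l x)..(l y), al t y := by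
    intro y
    have hpos : ∀ t ∈ Set.uIcc (l x) (l y), (0:ℝ) < t := by
      intro t ht
      rcases Set.mem_uIcc.1 ht with ⟨h1, _⟩ | ⟨h1, _⟩
      · exact lt_of_lt_of_le (hlpos x) h1
      · exact lt_of_lt_of_le (hlpos y) h1
    rw [intervalIntegral.integral_eq_sub_of_hasDerivAt
      (fun t ht => hal y t (hpos t ht))
      (((hslice y).mono (fun t ht => hpos t ht)).intervalIntegrable)]
  have key : HasDerivAt (fun y => a (l y) y - a (l x) y) (al (l x) x * l') x := by
    set c₀ := al (l x) x with hc₀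
    rw [hasDerivAt_iff_isLittleO]
    have hdecomp : ∀ y : ℝ,
        (a (l y) y - a (l x) y) - (a (l x) x - a (l x) x) - (y - x) • (c₀ * l')
        = ((a (l y) y - a (l x) y) - (l y - l x) * c₀)
          + c₀ * ((l y - l x) - (y - x) • l') := by
      intro y; simp only [smul_eq_mul]; ring
    simp only [hdecomp]
    apply IsLittleO.add
    · -- main term
      have h₁ : (fun y => (a (l y) y - a (l x) y) - (l y - l x) * c₀)
          =o[𝓝 x] (fun y => l y - l x) := by
        rw [isLittleO_iff]
        intro c hc
        have hca : ContinuousAt (fun p : ℝ × ℝ => al p.1 p.2) (l x, x) :=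
          halc.continuousAt ((isOpen_Ioi.prod isOpen_univ).mem_nhds ⟨hlpos x, trivial⟩)
        obtain ⟨ε, hε, hball⟩ := Metric.continuousAt_iff.1 hca c hc
        have hlc : ContinuousAt l x := hl.continuousAt
        have ev1 : ∀ᶠ y in 𝓝 x, |l y - l x| < ε / 2 := by
          have := Metric.continuousAt_iff.1 hlc (ε/2) (by linarith)
          obtain ⟨δ', hδ', hd⟩ := this
          filter_upwards [Metric.ball_mem_nhds x hδ'] with y hy
          have := hd hy
          rwa [Real.dist_eq] at this
        have ev2 : ∀ᶠ y in 𝓝 x, |y - x| < ε / 2 := by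
          filter_upwards [Metric.ball_mem_nhds x (by linarith : (0:ℝ) < ε/2)] with y hy
          rw [Metric.mem_ball, Real.dist_eq] at hy
          exact hy
        filter_upwards [ev1, ev2] with y hy1 hy2
        have hbd : ∀ t ∈ Set.uIoc (l x) (l y), ‖al t y - c₀‖ ≤ c := by
          intro t ht
          have ht' : t ∈ Set.uIcc (l x) (l y) := Set.uIoc_subset_uIcc ht
          have h1 : |t - l x| ≤ |l y - l x| := by
            rcases Set.mem_uIcc.1 ht' with ⟨ha1, ha2⟩ | ⟨ha1, ha2⟩ <;>
              rw [abs_le] <;> constructor <;>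
              · cases' abs_cases (l y - l x) with h h <;> linarith [h.1, h.2]
          have hdist : dist ((t, y) : ℝ × ℝ) ((l x, x) : ℝ × ℝ) < ε := by
            rw [Prod.dist_eq]
            apply max_lt
            · rw [Real.dist_eq]; linarith
            · rw [Real.dist_eq]; linarith
          have := hball hdist
          rw [Real.dist_eq] at this
          exact le_of_lt this
        have hint : IntervalIntegrable (fun t => al t y) MeasureTheory.volume (l x) (l y) := by
          apply ((hslice y).mono ?_).intervalIntegrable
          intro t ht
          rcases Set.mem_uIcc.1 ht with ⟨h1, _⟩ | ⟨h1, _⟩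
          · exact lt_of_lt_of_le (hlpos x) h1
          · exact lt_of_lt_of_le (hlpos y) h1
        have heq : (a (l y) y - a (l x) y) - (l y - l x) * c₀
            = ∫ t in (l x)..(l y), (al t y - c₀) := by
          rw [intervalIntegral.integral_sub hint intervalIntegrable_const,
            intervalIntegral.integral_const]
          rw [hFTC y, smul_eq_mul]
        rw [heq]
        calc ‖∫ t in (l x)..(l y), (al t y - c₀)‖
            ≤ c * |l y - l x| := intervalIntegral.norm_integral_le_of_norm_le_const hbd
          _ = c * ‖l y - l x‖ := by rw [Real.norm_eq_abs]
      exact h₁.trans_isBigO (hl.isBigO_sub)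
    · exact ((hasDerivAt_iff_isLittleO.1 hl).const_mul_left c₀)
  have := key.add hax
  refine this.congr_of_eventuallyEq (Filter.Eventually.of_forall fun y => ?_)
  simp


lemma int_inv_sq {t : ℝ} (ht : 1 ≤ t) :
    (∫ u in (1:ℝ)..t, (u ^ 2)⁻¹) = 1 - t⁻¹ := by
  have h : ∀ u ∈ Set.uIcc (1:ℝ) t, HasDerivAt (fun y : ℝ => -y⁻¹) ((u ^ 2)⁻¹) u := by
    intro u hu
    rw [Set.uIcc_of_le ht] at hu
    have hu0 : u ≠ 0 := by have := hu.1; positivity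
    have := (hasDerivAt_inv hu0).neg
    simp only [neg_neg] at this
    exact this
  have hint : IntervalIntegrable (fun u : ℝ => (u ^ 2)⁻¹) volume 1 t := by
    apply ContinuousOn.intervalIntegrable
    apply ContinuousOn.inv₀ (by fun_prop)
    intro u hu
    rw [Set.uIcc_of_le ht] at hu
    have := hu.1; positivity
  rw [intervalIntegral.integral_eq_sub_of_hasDerivAt h hint]
  ring

lemma abs_int_le {f : ℝ → ℝ} {c t : ℝ} (ht : 1 ≤ t) (hc : 0 ≤ c)
    (hf : IntervalIntegrable f volume 1 t)
    (hb : ∀ u ∈ Set.Icc (1:ℝ) t, |f u| ≤ c * (u ^ 2)⁻¹) :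
    |∫ u in (1:ℝ)..t, f u| ≤ c := by
  have hbd : IntervalIntegrable (fun u : ℝ => c * (u ^ 2)⁻¹) volume 1 t := by
    apply ContinuousOn.intervalIntegrable
    apply ContinuousOn.mul continuousOn_const
    apply ContinuousOn.inv₀ (by fun_prop)
    intro u hu
    rw [Set.uIcc_of_le ht] at hu
    have := hu.1; positivity
  have h1 : ‖∫ u in (1:ℝ)..t, f u‖ ≤ |∫ u in (1:ℝ)..t, c * (u ^ 2)⁻¹| := by
    apply intervalIntegral.norm_integral_le_abs_of_norm_le _ hbd
    have hsub : Set.uIoc (1:ℝ) t ⊆ Set.Icc 1 t := by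
      rw [Set.uIoc_of_le ht]; exact Set.Ioc_subset_Icc_self
    filter_upwards [MeasureTheory.ae_restrict_mem measurableSet_uIoc] with u hu
    exact hb u (hsub hu)
  rw [Real.norm_eq_abs] at h1
  have h2 : (∫ u in (1:ℝ)..t, c * (u ^ 2)⁻¹) = c * (1 - t⁻¹) := by
    rw [intervalIntegral.integral_const_mul, int_inv_sq ht]
  rw [h2] at h1
  have ht0 : 0 < t := lt_of_lt_of_le one_pos ht
  have hti : t⁻¹ ≤ 1 := by rw [inv_le_one_iff₀]; right; exact ht
  have hti0 : 0 ≤ t⁻¹ := by positivity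
  calc |∫ u in (1:ℝ)..t, f u| ≤ |c * (1 - t⁻¹)| := h1
    _ = c * (1 - t⁻¹) := abs_of_nonneg (by nlinarith)
    _ ≤ c := by nlinarith

private lemma Dlb_alg {u w A : ℝ} (hu : 1 ≤ u) (hw : 3/4 ≤ w) (hA : -(1/300) ≤ A) :
    u ^ 2 ≤ u * (2 * u * w + A) := by nlinarith

private lemma Dub_alg {u w A : ℝ} (hu : 1 ≤ u) (hw : w ≤ 5/4) (hA : A ≤ 1/300) :
    u * (2 * u * w + A) ≤ 4 * u ^ 2 := by nlinarith

private lemma gbound_alg {δ u w Aa D : ℝ} (hδ : 0 < δ) (hu : 1 ≤ u)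
    (hw : 3/4 ≤ w) (hw2 : w ≤ 5/4) (hA : |Aa| ≤ δ) (hD1 : u ^ 2 ≤ D) :
    |(-(Aa * w)) / D| ≤ 2 * δ * (u ^ 2)⁻¹ := by
  have hu0 : (0:ℝ) < u := lt_of_lt_of_le one_pos hu
  have hu2 : (0:ℝ) < u ^ 2 := by positivity
  have hD0 : (0:ℝ) < D := lt_of_lt_of_le hu2 hD1
  rw [abs_div, abs_of_pos hD0, abs_neg, abs_mul, abs_of_nonneg (by linarith : (0:ℝ) ≤ w)]
  calc |Aa| * w / D ≤ δ * (5/4) / u ^ 2 := by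
        apply div_le_div₀ (by positivity) _ hu2 hD1
        have h0 : 0 ≤ |Aa| := abs_nonneg _
        nlinarith
    _ ≤ 2 * δ * (u ^ 2)⁻¹ := by
        rw [div_eq_mul_inv]
        have : (0:ℝ) ≤ (u ^ 2)⁻¹ := by positivity
        nlinarith

private lemma Nbound_poly {δ u V P D : ℝ} (hδ : 0 < δ) (hδ1 : δ ≤ 1) (hu : 1 ≤ u)
    (hV : 0 ≤ V) (hP0 : 0 ≤ P) (hPu : P * u ≤ 2 * δ * V + δ * u)
    (hD1 : u ^ 2 ≤ D) (hD2 : D ≤ 4 * u ^ 2) :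
    ((5/4) * P + δ * V) * D + δ * (5/4) * (u * (2 * u * V + P)) ≤ δ * (19 * V + 7) * u ^ 2 := by
  have hu0 : (0:ℝ) < u := lt_of_lt_of_le one_pos hu
  have huu : u ≤ u ^ 2 := by nlinarith
  have h1u : (1:ℝ) ≤ u ^ 2 := by nlinarith
  have h2 : ((5/4) * P + δ * V) * D ≤ ((5/4) * P + δ * V) * (4 * u ^ 2) :=
    mul_le_mul_of_nonneg_left hD2 (by positivity)
  have ha1 : 5 * u * (P * u) ≤ 5 * u * (2 * δ * V + δ * u) :=
    mul_le_mul_of_nonneg_left hPu (by positivity)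
  have ha2 : (5/4) * δ * (P * u) ≤ (5/4) * δ * (2 * δ * V + δ * u) :=
    mul_le_mul_of_nonneg_left hPu (by positivity)
  have ha3 : δ * V * u ≤ δ * V * u ^ 2 := mul_le_mul_of_nonneg_left huu (by positivity)
  have ha4 : δ * V ≤ δ * V * u ^ 2 := le_mul_of_one_le_right (by positivity) h1u
  have ha5 : δ * u ≤ δ * u ^ 2 := mul_le_mul_of_nonneg_left huu hδ.le
  have ha6 : δ * δ * V ≤ δ * V :=
    mul_le_mul_of_nonneg_right (mul_le_of_le_one_right hδ.le hδ1) hV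
  have ha7 : δ * δ * u ≤ δ * u :=
    mul_le_mul_of_nonneg_right (mul_le_of_le_one_right hδ.le hδ1) hu0.le
  nlinarith

private lemma Kbound_alg {δ u w v Aa Al Ax D : ℝ}
    (hδ : 0 < δ) (hδ1 : δ ≤ 1) (hu : 1 ≤ u) (hw : 3/4 ≤ w) (hw2 : w ≤ 5/4)
    (hA : |Aa| ≤ δ) (hAl : |Al| ≤ δ * ((u * w) ^ 2)⁻¹) (hAx : |Ax| ≤ δ)
    (hD1 : u ^ 2 ≤ D) (hD2 : D ≤ 4 * u ^ 2) :
    |((-((Al * (u * v) + Ax) * w + Aa * v)) * D -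
       (-(Aa * w)) * (u * (2 * u * v + (Al * (u * v) + Ax)))) / D ^ 2|
      ≤ δ * (19 * |v| + 7) * (u ^ 2)⁻¹ := by
  have hu0 : (0:ℝ) < u := lt_of_lt_of_le one_pos hu
  have hu2 : (0:ℝ) < u ^ 2 := by positivity
  have hD0 : (0:ℝ) < D := lt_of_lt_of_le hu2 hD1
  have hv0 : (0:ℝ) ≤ |v| := abs_nonneg _
  have hw0 : (0:ℝ) ≤ w := by linarith
  -- |Al| * u^2 ≤ 2δ
  have hAl2 : |Al| * u ^ 2 ≤ 2 * δ := by
    have hw2' : (9/16:ℝ) ≤ w ^ 2 := by nlinarith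
    have h9 : (9/16) * u ^ 2 ≤ (u * w) ^ 2 := by nlinarith
    have h9' : (0:ℝ) < (9/16) * u ^ 2 := by positivity
    have hinv : ((u * w) ^ 2)⁻¹ ≤ ((9/16) * u ^ 2)⁻¹ := inv_anti₀ h9' h9
    have h5 : |Al| ≤ δ * ((9/16) * u ^ 2)⁻¹ :=
      hAl.trans (mul_le_mul_of_nonneg_left hinv hδ.le)
    calc |Al| * u ^ 2 ≤ (δ * ((9/16) * u ^ 2)⁻¹) * u ^ 2 :=
          mul_le_mul_of_nonneg_right h5 hu2.le
      _ = δ * (16/9) := by field_simp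
      _ ≤ 2 * δ := by linarith
  clear hAl
  -- |dA| * u ≤ 2δ|v| + δu
  have hPu : |Al * (u * v) + Ax| * u ≤ 2 * δ * |v| + δ * u := by
    have h1 : |Al * (u * v) + Ax| ≤ |Al| * (u * |v|) + |Ax| := by
      refine (abs_add_le _ _).trans ?_
      rw [abs_mul, abs_mul, abs_of_pos hu0]
    calc |Al * (u * v) + Ax| * u ≤ (|Al| * (u * |v|) + |Ax|) * u :=
          mul_le_mul_of_nonneg_right h1 hu0.le
      _ = (|Al| * u ^ 2) * |v| + |Ax| * u := by ring
      _ ≤ 2 * δ * |v| + δ * u := by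
          have := abs_nonneg Al
          have := abs_nonneg Ax
          nlinarith
  have hP0 : (0:ℝ) ≤ |Al * (u * v) + Ax| := abs_nonneg _
  -- triangle inequality for numerator
  have h1 : |(-((Al * (u * v) + Ax) * w + Aa * v)) * D -
        (-(Aa * w)) * (u * (2 * u * v + (Al * (u * v) + Ax)))|
      ≤ ((5/4) * |Al * (u * v) + Ax| + δ * |v|) * D
        + δ * (5/4) * (u * (2 * u * |v| + |Al * (u * v) + Ax|)) := by
    have t1 : |(-((Al * (u * v) + Ax) * w + Aa * v)) * D|
        ≤ ((5/4) * |Al * (u * v) + Ax| + δ * |v|) * D := by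
      rw [abs_mul, abs_of_pos hD0, abs_neg]
      refine mul_le_mul_of_nonneg_right ?_ hD0.le
      refine (abs_add_le _ _).trans ?_
      rw [abs_mul, abs_mul, abs_of_nonneg hw0]
      have e1 : |Al * (u * v) + Ax| * w ≤ (5/4) * |Al * (u * v) + Ax| := by nlinarith
      have e2 : |Aa| * |v| ≤ δ * |v| := mul_le_mul_of_nonneg_right hA hv0
      linarith
    have t2 : |(-(Aa * w)) * (u * (2 * u * v + (Al * (u * v) + Ax)))|
        ≤ δ * (5/4) * (u * (2 * u * |v| + |Al * (u * v) + Ax|)) := by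
      rw [abs_mul, abs_neg, abs_mul, abs_mul, abs_of_pos hu0, abs_of_nonneg hw0]
      have h3 : |2 * u * v + (Al * (u * v) + Ax)| ≤ 2 * u * |v| + |Al * (u * v) + Ax| := by
        refine (abs_add_le _ _).trans ?_
        rw [abs_mul, abs_mul, abs_of_pos hu0, abs_of_nonneg (by norm_num : (0:ℝ) ≤ 2)]
      have h4 : |Aa| * w ≤ δ * (5/4) := mul_le_mul hA hw2 hw0 hδ.le
      have h5 : u * |2 * u * v + (Al * (u * v) + Ax)|
          ≤ u * (2 * u * |v| + |Al * (u * v) + Ax|) :=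
        mul_le_mul_of_nonneg_left h3 hu0.le
      have h6 : (0:ℝ) ≤ u * |2 * u * v + (Al * (u * v) + Ax)| := by positivity
      have h7 : (0:ℝ) ≤ |Aa| * w := by positivity
      nlinarith
    calc |(-((Al * (u * v) + Ax) * w + Aa * v)) * D -
          (-(Aa * w)) * (u * (2 * u * v + (Al * (u * v) + Ax)))|
        ≤ |(-((Al * (u * v) + Ax) * w + Aa * v)) * D|
          + |(-(Aa * w)) * (u * (2 * u * v + (Al * (u * v) + Ax)))| := abs_sub _ _
      _ ≤ _ := by linarith
  have hNb : |(-((Al * (u * v) + Ax) * w + Aa * v)) * D -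
        (-(Aa * w)) * (u * (2 * u * v + (Al * (u * v) + Ax)))|
      ≤ δ * (19 * |v| + 7) * u ^ 2 :=
    h1.trans (Nbound_poly hδ hδ1 hu hv0 hP0 hPu hD1 hD2)
  have hDsq : (u ^ 2) ^ 2 ≤ D ^ 2 := by nlinarith
  calc |((-((Al * (u * v) + Ax) * w + Aa * v)) * D -
        (-(Aa * w)) * (u * (2 * u * v + (Al * (u * v) + Ax)))) / D ^ 2|
      = |(-((Al * (u * v) + Ax) * w + Aa * v)) * D -
        (-(Aa * w)) * (u * (2 * u * v + (Al * (u * v) + Ax)))| / D ^ 2 := by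
        rw [abs_div, abs_of_pos (by positivity : (0:ℝ) < D ^ 2)]
    _ ≤ (δ * (19 * |v| + 7) * u ^ 2) / (u ^ 2) ^ 2 :=
        div_le_div₀ (by positivity) hNb (by positivity) hDsq
    _ = δ * (19 * |v| + 7) * (u ^ 2)⁻¹ := by field_simp
/-- Angular-regularity part of Lemma 4.9: the angular derivative of the ratio
`w̃(s,x)` of the luminosity reparametrization is bounded by `Cδ` and converges
as `s → ∞`. -/
theorem penrose_luminosity_angular_regularity :
    ∃ δ₀ ∈ Set.Ioo (0:ℝ) 1, ∃ C > (0:ℝ), ∀ δ : ℝ, 0 < δ → δ ≤ δ₀ →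
    ∀ a al ax : ℝ → ℝ → ℝ,
      ContinuousOn (fun p : ℝ × ℝ => a p.1 p.2) (Set.Ioi 0 ×ˢ Set.univ) →
      ContinuousOn (fun p : ℝ × ℝ => al p.1 p.2) (Set.Ioi 0 ×ˢ Set.univ) →
      ContinuousOn (fun p : ℝ × ℝ => ax p.1 p.2) (Set.Ioi 0 ×ˢ Set.univ) →
      (∀ x : ℝ, ∀ l > (0:ℝ), HasDerivAt (fun l' => a l' x) (al l x) l) →
      (∀ l > (0:ℝ), ∀ x : ℝ, HasDerivAt (fun x' => a l x') (ax l x) x) →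
      (∀ l > (0:ℝ), ∀ x : ℝ,
        |a l x| ≤ δ ∧ |al l x| ≤ δ * (l ^ 2)⁻¹ ∧ |ax l x| ≤ δ) →
      ∀ wt wx : ℝ → ℝ → ℝ,
        ContinuousOn (fun p : ℝ × ℝ => wt p.1 p.2) (Set.Ici 1 ×ˢ Set.univ) →
        ContinuousOn (fun p : ℝ × ℝ => wx p.1 p.2) (Set.Ici 1 ×ˢ Set.univ) →
        (∀ s ≥ (1:ℝ), ∀ x : ℝ, 0 < wt s x) →
        (∀ x : ℝ, wt 1 x = 1) →
        (∀ s ≥ (1:ℝ), ∀ x : ℝ, HasDerivAt (fun s' => wt s' x)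
          (-(a (s * wt s x) x * wt s x) /
            (s * (2 * s * wt s x + a (s * wt s x) x))) s) →
        (∀ s ≥ (1:ℝ), ∀ x : ℝ, HasDerivAt (fun x' => wt s x') (wx s x) x) →
        ((∀ s ≥ (1:ℝ), ∀ x : ℝ, |wx s x| ≤ C * δ) ∧
          ∀ x : ℝ, ∃ L : ℝ, Tendsto (fun s => wx s x) atTop (nhds L)) := by
  refine ⟨1/300, by norm_num, 100, by norm_num, ?_⟩
  intro δ hδpos hδ300 a al ax hac halc haxc hal hax habd wt wx hwtc hwxc hwtpos hwt1 hode hder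
  have hδ1 : δ ≤ 1 := by linarith
  have hlpos : ∀ u, 1 ≤ u → ∀ x : ℝ, 0 < u * wt u x :=
    fun u hu x => mul_pos (by linarith) (hwtpos u hu x)
  have hAbd : ∀ u, 1 ≤ u → ∀ x : ℝ, |a (u * wt u x) x| ≤ δ :=
    fun u hu x => (habd _ (hlpos u hu x) x).1
  have hAlbd : ∀ u, 1 ≤ u → ∀ x : ℝ, |al (u * wt u x) x| ≤ δ * ((u * wt u x) ^ 2)⁻¹ :=
    fun u hu x => (habd _ (hlpos u hu x) x).2.1
  have hAxbd : ∀ u, 1 ≤ u → ∀ x : ℝ, |ax (u * wt u x) x| ≤ δ :=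
    fun u hu x => (habd _ (hlpos u hu x) x).2.2
  have hwt_slice : ∀ x : ℝ, ContinuousOn (fun u => wt u x) (Set.Ici 1) :=
    fun x u hu => ((hode u hu x).continuousAt).continuousWithinAt
  -- local lower/upper bounds on D
  have hDlb : ∀ u, 1 ≤ u → ∀ x : ℝ, 3/4 ≤ wt u x → u ^ 2 ≤ Df a wt u x := by
    intro u hu x hw
    have hA := hAbd u hu x
    have hA' : -(1/300) ≤ a (u * wt u x) x := by
      have := neg_abs_le (a (u * wt u x) x); linarith
    exact Dlb_alg hu hw hA'
  have hDub : ∀ u, 1 ≤ u → ∀ x : ℝ, wt u x ≤ 5/4 → Df a wt u x ≤ 4 * u ^ 2 := by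
    intro u hu x hw
    have hA := hAbd u hu x
    have hA' : a (u * wt u x) x ≤ 1/300 := by
      have := le_abs_self (a (u * wt u x) x); linarith
    exact Dub_alg hu hw hA'
  -- slice continuity of u ↦ a(u·wt(u,x), x)
  have hAcont : ∀ x : ℝ, ContinuousOn (fun u => a (u * wt u x) x) (Set.Ici 1) := by
    intro x
    have hcurve : ContinuousOn (fun u => ((u * wt u x, x) : ℝ × ℝ)) (Set.Ici 1) :=
      (continuousOn_id.mul (hwt_slice x)).prodMk continuousOn_const
    exact hac.comp hcurve (fun u hu => ⟨hlpos u hu x, trivial⟩)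
  -- slice continuity of g, given local lower bound for wt
  have hgcont : ∀ (x t : ℝ), 1 ≤ t → (∀ u ∈ Set.Icc (1:ℝ) t, 3/4 ≤ wt u x) →
      ContinuousOn (fun u => gf a wt u x) (Set.Icc 1 t) := by
    intro x t ht hw
    have hDne : ∀ u ∈ Set.Icc (1:ℝ) t, Df a wt u x ≠ 0 := by
      intro u hu
      have h1 := hDlb u hu.1 x (hw u hu)
      have : (0:ℝ) < u ^ 2 := by nlinarith [hu.1]
      exact ne_of_gt (lt_of_lt_of_le this h1)
    unfold gf
    apply ContinuousOn.div
    · exact (((hAcont x).mono Set.Icc_subset_Ici_self).mul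
        ((hwt_slice x).mono Set.Icc_subset_Ici_self)).neg
    · exact continuousOn_id.mul
        (((continuousOn_const.mul continuousOn_id).mul
          ((hwt_slice x).mono Set.Icc_subset_Ici_self)).add
          ((hAcont x).mono Set.Icc_subset_Ici_self))
    · exact hDne
  -- FTC for wt
  have hFTC : ∀ (x t : ℝ), 1 ≤ t → (∀ u ∈ Set.Icc (1:ℝ) t, 3/4 ≤ wt u x) →
      wt t x = 1 + ∫ u in (1:ℝ)..t, gf a wt u x := by
    intro x t ht hw
    have hderivs : ∀ u ∈ Set.uIcc (1:ℝ) t, HasDerivAt (fun s' => wt s' x) (gf a wt u x) u := by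
      intro u hu
      rw [Set.uIcc_of_le ht] at hu
      exact hode u hu.1 x
    have hint : IntervalIntegrable (fun u => gf a wt u x) volume 1 t := by
      apply ContinuousOn.intervalIntegrable
      rw [Set.uIcc_of_le ht]
      exact hgcont x t ht hw
    have h := intervalIntegral.integral_eq_sub_of_hasDerivAt hderivs hint
    rw [h, hwt1 x]; ring
  -- uniform bound |wt - 1| ≤ 2δ via bootstrap
  have hW : ∀ (x s : ℝ), 1 ≤ s → |wt s x - 1| ≤ 2 * δ := by
    intro x
    have hb := bootstrap (f := fun s => wt s x - 1) (b := 2 * δ) (B := 1/4)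
      (by linarith) ((hwt_slice x).sub continuousOn_const)
      (by show |wt 1 x - 1| ≤ 2 * δ; rw [hwt1 x]; simp; linarith) ?_
    · exact fun s hs => hb s hs
    intro t ht hyp
    have hw34 : ∀ u ∈ Set.Icc (1:ℝ) t, 3/4 ≤ wt u x := by
      intro u hu
      have := abs_le.1 (hyp u hu); linarith [this.1]
    have hw54 : ∀ u ∈ Set.Icc (1:ℝ) t, wt u x ≤ 5/4 := by
      intro u hu
      have := abs_le.1 (hyp u hu); linarith [this.2]
    have hft := hFTC x t ht hw34
    have heq : wt t x - 1 = ∫ u in (1:ℝ)..t, gf a wt u x := by rw [hft]; ring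
    show |wt t x - 1| ≤ 2 * δ
    rw [heq]
    have hint : IntervalIntegrable (fun u => gf a wt u x) volume 1 t := by
      apply ContinuousOn.intervalIntegrable
      rw [Set.uIcc_of_le ht]
      exact hgcont x t ht hw34
    apply abs_int_le ht (by positivity) hint
    intro u hu
    have := gbound_alg (δ := δ) (u := u) (w := wt u x) (Aa := a (u * wt u x) x)
      (D := Df a wt u x) hδpos hu.1 (hw34 u hu) (hw54 u hu) (hAbd u hu.1 x)
      (hDlb u hu.1 x (hw34 u hu))
    exact this
  -- global bounds on wt
  have hw34g : ∀ u, 1 ≤ u → ∀ x : ℝ, 3/4 ≤ wt u x := by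
    intro u hu x
    have := abs_le.1 (hW x u hu); linarith [this.1]
  have hw54g : ∀ u, 1 ≤ u → ∀ x : ℝ, wt u x ≤ 5/4 := by
    intro u hu x
    have := abs_le.1 (hW x u hu); linarith [this.2]
  have hDlb' : ∀ u, 1 ≤ u → ∀ x : ℝ, u ^ 2 ≤ Df a wt u x :=
    fun u hu x => hDlb u hu x (hw34g u hu x)
  have hDpos : ∀ u, 1 ≤ u → ∀ x : ℝ, 0 < Df a wt u x := by
    intro u hu x
    have : (0:ℝ) < u ^ 2 := by nlinarith
    exact lt_of_lt_of_le this (hDlb' u hu x)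
  have hDne : ∀ u, 1 ≤ u → ∀ x : ℝ, Df a wt u x ≠ 0 :=
    fun u hu x => ne_of_gt (hDpos u hu x)
  -- the x-derivative of g is K
  have hKder : ∀ u, 1 ≤ u → ∀ x : ℝ,
      HasDerivAt (fun x' => gf a wt u x') (Kf a al ax wt wx u x) x := by
    intro u hu x
    have hAd : HasDerivAt (fun x' => a (u * wt u x') x')
        (al (u * wt u x) x * (u * wx u x) + ax (u * wt u x) x) x := by
      exact hasDerivAt_comp_curve (l := fun x' => u * wt u x') halc hal
        (hax _ (hlpos u hu x) x) ((hder u hu x).const_mul u) (fun y => hlpos u hu y)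
    have hwd := hder u hu x
    have hn : HasDerivAt (fun x' => -(a (u * wt u x') x' * wt u x'))
        (-((al (u * wt u x) x * (u * wx u x) + ax (u * wt u x) x) * wt u x
            + a (u * wt u x) x * wx u x)) x := (hAd.mul hwd).neg
    have hd : HasDerivAt (fun x' => u * (2 * u * wt u x' + a (u * wt u x') x'))
        (u * (2 * u * wx u x + (al (u * wt u x) x * (u * wx u x) + ax (u * wt u x) x))) x := by
      have h1 : HasDerivAt (fun x' => 2 * u * wt u x') (2 * u * wx u x) x := hwd.const_mul (2 * u)
      exact (h1.add hAd).const_mul u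
    exact hn.div hd (hDne u hu x)
  -- the K bound
  have hKbd : ∀ u, 1 ≤ u → ∀ x : ℝ,
      |Kf a al ax wt wx u x| ≤ δ * (19 * |wx u x| + 7) * (u ^ 2)⁻¹ := by
    intro u hu x
    exact Kbound_alg hδpos hδ1 hu (hw34g u hu x) (hw54g u hu x) (hAbd u hu x)
      (hAlbd u hu x) (hAxbd u hu x) (hDlb' u hu x) (hDub u hu x (hw54g u hu x))
  -- joint continuity of K
  have hmapsTo : Set.MapsTo (fun p : ℝ × ℝ => ((p.1 * wt p.1 p.2, p.2) : ℝ × ℝ))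
      (Set.Ici 1 ×ˢ Set.univ) (Set.Ioi 0 ×ˢ Set.univ) :=
    fun p hp => ⟨hlpos p.1 hp.1 p.2, trivial⟩
  have hmap : ContinuousOn (fun p : ℝ × ℝ => ((p.1 * wt p.1 p.2, p.2) : ℝ × ℝ))
      (Set.Ici 1 ×ˢ Set.univ) :=
    (continuous_fst.continuousOn.mul hwtc).prodMk continuous_snd.continuousOn
  have hAc2 : ContinuousOn (fun p : ℝ × ℝ => a (p.1 * wt p.1 p.2) p.2) (Set.Ici 1 ×ˢ Set.univ) :=
    hac.comp hmap hmapsTo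
  have hAlc2 : ContinuousOn (fun p : ℝ × ℝ => al (p.1 * wt p.1 p.2) p.2) (Set.Ici 1 ×ˢ Set.univ) :=
    halc.comp hmap hmapsTo
  have hAxc2 : ContinuousOn (fun p : ℝ × ℝ => ax (p.1 * wt p.1 p.2) p.2) (Set.Ici 1 ×ˢ Set.univ) :=
    haxc.comp hmap hmapsTo
  have hfst : ContinuousOn (fun p : ℝ × ℝ => p.1) (Set.Ici 1 ×ˢ Set.univ) :=
    continuous_fst.continuousOn
  have hdAc : ContinuousOn (fun p : ℝ × ℝ => dAf al ax wt wx p.1 p.2) (Set.Ici 1 ×ˢ Set.univ) := by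
    unfold dAf
    exact (hAlc2.mul (hfst.mul hwxc)).add hAxc2
  have hDc : ContinuousOn (fun p : ℝ × ℝ => Df a wt p.1 p.2) (Set.Ici 1 ×ˢ Set.univ) := by
    unfold Df
    exact hfst.mul (((continuousOn_const.mul hfst).mul hwtc).add hAc2)
  have hdDc : ContinuousOn (fun p : ℝ × ℝ => dDf al ax wt wx p.1 p.2) (Set.Ici 1 ×ˢ Set.univ) := by
    unfold dDf
    exact hfst.mul (((continuousOn_const.mul hfst).mul hwxc).add hdAc)
  have hKcont : ContinuousOn (fun p : ℝ × ℝ => Kf a al ax wt wx p.1 p.2)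
      (Set.Ici 1 ×ˢ Set.univ) := by
    unfold Kf
    apply ContinuousOn.div
    · exact (((hdAc.mul hwtc).add (hAc2.mul hwxc)).neg.mul hDc).sub
        ((hAc2.mul hwtc).neg.mul hdDc)
    · exact hDc.pow 2
    · intro p hp
      exact pow_ne_zero 2 (hDne p.1 hp.1 p.2)
  have hKslice : ∀ x : ℝ, ContinuousOn (fun u => Kf a al ax wt wx u x) (Set.Ici 1) := by
    intro x
    have hc : ContinuousOn (fun u : ℝ => ((u, x) : ℝ × ℝ)) (Set.Ici 1) :=
      (continuous_id.prodMk continuous_const).continuousOn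
    have h := hKcont.comp hc (fun u (hu : u ∈ Set.Ici (1:ℝ)) => Set.mk_mem_prod hu (Set.mem_univ x))
    exact h
  -- FTC global
  have hFTCg : ∀ (x s : ℝ), 1 ≤ s → wt s x = 1 + ∫ u in (1:ℝ)..s, gf a wt u x :=
    fun x s hs => hFTC x s hs (fun u hu => hw34g u hu.1 x)
  -- the identity wx = ∫ K
  have hident : ∀ (x s : ℝ), 1 ≤ s → wx s x = ∫ u in (1:ℝ)..s, Kf a al ax wt wx u x := by
    intro x s hs
    have hΙ : Set.uIoc (1:ℝ) s ⊆ Set.Icc 1 s := by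
      rw [Set.uIoc_of_le hs]; exact Set.Ioc_subset_Icc_self
    have hcpt : IsCompact ((Set.Icc (1:ℝ) s) ×ˢ (Set.Icc (x-1) (x+1))) :=
      isCompact_Icc.prod isCompact_Icc
    obtain ⟨M, hM⟩ := hcpt.exists_bound_of_continuousOn
      (hKcont.mono (Set.prod_mono Set.Icc_subset_Ici_self (Set.subset_univ _)))
    have hgslice : ∀ x' : ℝ, ContinuousOn (fun u => gf a wt u x') (Set.Icc 1 s) :=
      fun x' => hgcont x' s hs (fun u hu => hw34g u hu.1 x')
    have hm1 : ∀ᶠ x' in 𝓝 x, AEStronglyMeasurable (fun u => gf a wt u x')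
        (volume.restrict (Set.uIoc (1:ℝ) s)) := by
      apply Filter.Eventually.of_forall
      intro x'
      exact (((hgslice x').mono hΙ).aestronglyMeasurable measurableSet_uIoc)
    have hm2 : IntervalIntegrable (fun u => gf a wt u x) volume 1 s := by
      apply ContinuousOn.intervalIntegrable
      rw [Set.uIcc_of_le hs]
      exact hgslice x
    have hm3 : AEStronglyMeasurable (fun u => Kf a al ax wt wx u x)
        (volume.restrict (Set.uIoc (1:ℝ) s)) :=
      ((hKslice x).mono (fun u hu => (hΙ hu).1)).aestronglyMeasurable measurableSet_uIoc
    have hm4 : ∀ᵐ u ∂(volume : Measure ℝ), u ∈ Set.uIoc (1:ℝ) s →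
        ∀ x' ∈ Metric.ball x 1, ‖Kf a al ax wt wx u x'‖ ≤ M := by
      apply MeasureTheory.ae_of_all
      intro u hu x' hx'
      apply hM (u, x')
      refine ⟨hΙ hu, ?_⟩
      have h5 := Metric.mem_ball.1 hx'
      rw [Real.dist_eq] at h5
      have h6 := abs_lt.1 h5
      exact ⟨by linarith [h6.1], by linarith [h6.2]⟩
    have hm6 : ∀ᵐ u ∂(volume : Measure ℝ), u ∈ Set.uIoc (1:ℝ) s →
        ∀ x' ∈ Metric.ball x 1, HasDerivAt (fun y => gf a wt u y)
          (Kf a al ax wt wx u x') x' := by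
      apply MeasureTheory.ae_of_all
      intro u hu x' _
      exact hKder u (hΙ hu).1 x'
    have key := intervalIntegral.hasDerivAt_integral_of_dominated_loc_of_deriv_le
      (F := fun x' u => gf a wt u x') (F' := fun x' u => Kf a al ax wt wx u x')
      (x₀ := x) (a := 1) (b := s) (bound := fun _ => M) (μ := volume) (s := Metric.ball x 1)
      (Metric.ball_mem_nhds x one_pos) hm1 hm2 hm3 hm4 intervalIntegrable_const hm6
    obtain ⟨-, hkey⟩ := key
    have h3 : (fun x' => wt s x') = fun x' => 1 + ∫ u in (1:ℝ)..s, gf a wt u x' :=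
      funext (fun x' => hFTCg x' s hs)
    have h4 := hder s hs x
    rw [h3] at h4
    exact h4.unique (hkey.const_add 1)
  -- wx(1,x) = 0
  have hwx1 : ∀ x : ℝ, wx 1 x = 0 := by
    intro x
    have h1 := hder 1 le_rfl x
    have h2 : (fun x' => wt 1 x') = fun _ => (1:ℝ) := funext hwt1
    rw [h2] at h1
    exact h1.unique (hasDerivAt_const x 1)
  -- wx slice continuity
  have hwx_slice : ∀ x : ℝ, ContinuousOn (fun u => wx u x) (Set.Ici 1) := by
    intro x
    have hc : ContinuousOn (fun u : ℝ => ((u, x) : ℝ × ℝ)) (Set.Ici 1) :=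
      (continuous_id.prodMk continuous_const).continuousOn
    have h := hwxc.comp hc (fun u (hu : u ∈ Set.Ici (1:ℝ)) => Set.mk_mem_prod hu (Set.mem_univ x))
    exact h
  -- interval integrability of K slices
  have hKint : ∀ (x t : ℝ), 1 ≤ t →
      IntervalIntegrable (fun u => Kf a al ax wt wx u x) volume 1 t := by
    intro x t ht
    apply ContinuousOn.intervalIntegrable
    rw [Set.uIcc_of_le ht]
    exact (hKslice x).mono Set.Icc_subset_Ici_self
  -- bootstrap bound for wx
  have hwxbd : ∀ (x s : ℝ), 1 ≤ s → |wx s x| ≤ 14 * δ := by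
    intro x
    have hb := bootstrap (f := fun s => wx s x) (b := 14 * δ) (B := 100 * δ)
      (by linarith) (hwx_slice x)
      (by show |wx 1 x| ≤ 14 * δ; rw [hwx1 x]; simp; linarith) ?_
    · exact fun s hs => hb s hs
    intro t ht hyp
    show |wx t x| ≤ 14 * δ
    rw [hident x t ht]
    apply abs_int_le ht (by positivity) (hKint x t ht)
    intro u hu
    have hb1 := hKbd u hu.1 x
    have hv := hyp u hu
    have hv' : |wx u x| ≤ 100 * δ := hv
    have hinv : (0:ℝ) ≤ (u ^ 2)⁻¹ := by positivity
    calc |Kf a al ax wt wx u x| ≤ δ * (19 * |wx u x| + 7) * (u ^ 2)⁻¹ := hb1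
      _ ≤ 14 * δ * (u ^ 2)⁻¹ := by
          apply mul_le_mul_of_nonneg_right _ hinv
          nlinarith [abs_nonneg (wx u x)]
  refine ⟨?_, ?_⟩
  · intro s hs x
    calc |wx s x| ≤ 14 * δ := hwxbd x s hs
      _ ≤ 100 * δ := by linarith
  · intro x
    -- integrability of K on Ioi 1
    have hKi : IntegrableOn (fun u => Kf a al ax wt wx u x) (Set.Ioi 1) volume := by
      have hdom : IntegrableOn (fun u : ℝ => 14 * δ * u ^ (-2:ℝ)) (Set.Ioi 1) volume :=
        (integrableOn_Ioi_rpow_of_lt (by norm_num) one_pos).const_mul (14 * δ)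
      apply MeasureTheory.Integrable.mono' hdom
      · exact ((hKslice x).mono Set.Ioi_subset_Ici_self).aestronglyMeasurable measurableSet_Ioi
      · filter_upwards [MeasureTheory.ae_restrict_mem measurableSet_Ioi] with u hu
        have hu1 : (1:ℝ) ≤ u := le_of_lt hu
        have hu0 : (0:ℝ) < u := by linarith
        have hrw : u ^ (-2:ℝ) = (u ^ 2)⁻¹ := by
          rw [show (-2:ℝ) = -((2:ℕ):ℝ) by norm_num, Real.rpow_neg hu0.le, Real.rpow_natCast]
        rw [Real.norm_eq_abs, hrw]
        have hinv : (0:ℝ) ≤ (u ^ 2)⁻¹ := by positivity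
        calc |Kf a al ax wt wx u x| ≤ δ * (19 * |wx u x| + 7) * (u ^ 2)⁻¹ := hKbd u hu1 x
          _ ≤ 14 * δ * (u ^ 2)⁻¹ := by
              apply mul_le_mul_of_nonneg_right _ hinv
              have := hwxbd x u hu1
              nlinarith [abs_nonneg (wx u x)]
    have htend := MeasureTheory.intervalIntegral_tendsto_integral_Ioi 1 hKi
      (tendsto_id (α := ℝ))
    refine ⟨_, Filter.Tendsto.congr' ?_ htend⟩
    filter_upwards [eventually_ge_atTop (1:ℝ)] with s hs
    exact (hident x s hs).symm
end
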